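/- Let A be a reduced order (a commutative ring whose additive group is free of finite rank over ℤ, with no nonzero nilpotents). Then the intersection of the kernels of all ring homomorphisms A → ℂ is zero. -/

import Mathlib

set_option maxHeartbeats 1000000 in
set_option synthInstance.maxHeartbeats 200000 in
/-- For a reduced order `A` (commutative ring, additive group free of finite rank
over ℤ, no nonzero nilpotents), the intersection of the kernels of all ring
homomorphisms `A → ℂ` is zero. -/
theorem stmt2 (A : Type*) [CommRing A] [IsReduced A]
    [Module.Free ℤ A] [Module.Finite ℤ A] :
    (⨅ ψ : A →+* ℂ, RingHom.ker ψ) = ⊥ := by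
  rw [eq_bot_iff]
  intro a ha
  rw [Ideal.mem_bot]
  by_contra h0
  haveI hA : Algebra.IsIntegral ℤ A := Algebra.IsIntegral.of_finite ℤ A
  set M : Submonoid A :=
    Submonoid.map (Int.castRingHom A).toMonoidHom (nonZeroDivisors ℤ) with hM
  have hMle : M ≤ nonZeroDivisors A := by
    rintro x ⟨n, hn, rfl⟩
    rw [mem_nonZeroDivisors_iff_right]
    intro z hz
    have h1 : (n : ℤ) • z = 0 := by
      rw [zsmul_eq_mul]
      simpa [mul_comm] using hz
    rcases smul_eq_zero.mp h1 with h | h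
    · exact absurd h (nonZeroDivisors.ne_zero hn)
    · exact h
  -- the localization B of A at the nonzero integers
  set B := Localization M with hB
  have hinj : Function.Injective (algebraMap A B) := IsLocalization.injective B hMle
  -- nonzero integers become units in B
  have hunit : ∀ n : nonZeroDivisors ℤ, IsUnit (algebraMap ℤ B (n : ℤ)) := by
    intro n
    have hmem : (((n : ℤ) : A)) ∈ M := ⟨(n : ℤ), n.2, rfl⟩
    have h1 : algebraMap ℤ B (n : ℤ) = algebraMap A B ((n : ℤ) : A) := by
      simp [map_intCast]
    rw [h1]
    exact IsLocalization.map_units B ⟨_, hmem⟩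
  -- ℚ-algebra structure on B
  let f : ℚ →+* B := IsLocalization.lift (M := nonZeroDivisors ℤ) hunit
  letI : Algebra ℚ B := f.toAlgebra
  have halg : algebraMap ℚ B = f := rfl
  -- B is integral over ℚ
  haveI hBint : Algebra.IsIntegral ℚ B := by
    constructor
    intro b
    obtain ⟨⟨x, m⟩, hb⟩ := IsLocalization.surj M b
    obtain ⟨n, hn, hm⟩ := m.2
    have hnQ : ((n : ℤ) : ℚ) ≠ 0 := by
      exact_mod_cast nonZeroDivisors.ne_zero hn
    obtain ⟨p, pmonic, hp⟩ := Algebra.IsIntegral.isIntegral (R := ℤ) (A := A) x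
    have hxint : IsIntegral ℚ (algebraMap A B x) := by
      refine ⟨p.map (Int.castRingHom ℚ), pmonic.map _, ?_⟩
      have h2 : (algebraMap ℚ B).comp (Int.castRingHom ℚ) =
          (algebraMap A B).comp (algebraMap ℤ A) := RingHom.ext_int _ _
      rw [Polynomial.eval₂_map, h2, ← Polynomial.hom_eval₂, hp, map_zero]
    have hfn : f ((n : ℤ) : ℚ) = algebraMap A B (m : A) := by
      have h1 : f (algebraMap ℤ ℚ n) = algebraMap ℤ B n := IsLocalization.lift_eq hunit n
      have h2 : algebraMap ℤ B n = algebraMap A B ((n : A)) := by simp [map_intCast]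
      have h3 : ((m : A)) = ((n : A)) := by rw [← hm]; rfl
      rw [h3, ← h2, ← h1]
      norm_num
    have hu : f (((n : ℤ) : ℚ)⁻¹) * algebraMap A B (m : A) = 1 := by
      rw [← hfn, ← map_mul, inv_mul_cancel₀ hnQ, map_one]
    have hbeq : b = algebraMap A B x * f (((n : ℤ) : ℚ)⁻¹) := by
      calc b = b * (f (((n : ℤ) : ℚ)⁻¹) * algebraMap A B (m : A)) := by
              rw [hu, mul_one]
        _ = (b * algebraMap A B (m : A)) * f (((n : ℤ) : ℚ)⁻¹) := by ring
        _ = algebraMap A B x * f (((n : ℤ) : ℚ)⁻¹) := by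
              rw [show b * algebraMap A B (m : A) = algebraMap A B x from hb]
    rw [hbeq, show f (((n : ℤ) : ℚ)⁻¹) = algebraMap ℚ B (((n : ℤ) : ℚ)⁻¹) from rfl]
    exact hxint.mul isIntegral_algebraMap
  -- the image of a in B is nonzero, hence not nilpotent, hence outside some prime
  have hb0 : algebraMap A B a ≠ 0 := by
    intro h
    exact h0 (hinj (by simpa using h))
  have hnotnil : ¬ IsNilpotent (algebraMap A B a) := fun h => hb0 h.eq_zero
  have hq : ∃ q : Ideal B, q.IsPrime ∧ algebraMap A B a ∉ q := by
    by_contra h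
    push_neg at h
    apply hnotnil
    rw [← mem_nilradical, nilradical_eq_sInf, Ideal.mem_sInf]
    intro q hqp
    exact h q hqp
  obtain ⟨q, hqp, hqa⟩ := hq
  haveI := hqp
  -- the quotient is a field algebraic over ℚ
  haveI hSint : Algebra.IsIntegral ℚ (B ⧸ q) := by
    constructor
    intro x
    obtain ⟨b, rfl⟩ := Ideal.Quotient.mk_surjective x
    exact (Algebra.IsIntegral.isIntegral (R := ℚ) b).map (Ideal.Quotient.mkₐ ℚ q)
  have hfield : IsField (B ⧸ q) :=
    isField_of_isIntegral_of_isField' (R := ℚ) (Field.toIsField ℚ)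
  letI : Field (B ⧸ q) := hfield.toField
  haveI : NoZeroSMulDivisors ℚ (B ⧸ q) :=
    inferInstance
  -- lift to ℂ
  let φ : (B ⧸ q) →ₐ[ℚ] ℂ := IsAlgClosed.lift
  let ψ : A →+* ℂ := (φ.toRingHom.comp (Ideal.Quotient.mk q)).comp (algebraMap A B)
  have hψa : ψ a = 0 := by
    have := Ideal.mem_iInf.mp ha ψ
    rwa [RingHom.mem_ker] at this
  apply hqa
  have hmk : Ideal.Quotient.mk q (algebraMap A B a) = 0 := by
    apply φ.toRingHom.injective
    simpa [ψ] using hψa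
  rwa [Ideal.Quotient.eq_zero_iff_mem] at hmk
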